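/- Let u and v be prefix-incomparable words over an alphabet Σ and let K = max(|u|,|v|). Then for every natural number k, the set of words of length at most k·K that belong to the language {u,v}* has cardinality at least 2^k. -/

import Mathlib

open Computability

section aux

variable {A : Type*} (u v : List A)

private def dUV (b : Bool) : List A := if b then u else v

private lemma joinUV_inj (huv : ¬ u <+: v) (hvu : ¬ v <+: u) :
    ∀ l1 l2 : List Bool, l1.length = l2.length →
      (l1.map (dUV u v)).flatten = (l2.map (dUV u v)).flatten → l1 = l2 := by
  intro l1
  induction l1 with
  | nil => intro l2 h _; exact (List.length_eq_zero_iff.mp h.symm).symm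
  | cons b l1 ih =>
    intro l2 h hj
    cases l2 with
    | nil => simp at h
    | cons b2 l2 =>
      simp only [List.map_cons, List.flatten_cons] at hj
      have hbb : b = b2 := by
        by_contra hne
        cases b <;> cases b2 <;> simp_all [dUV]
        · rcases List.prefix_or_prefix_of_prefix (hj ▸ List.prefix_append v _)
            (List.prefix_append u _) with h' | h'
          · exact hvu h'
          · exact huv h'
        · rcases List.prefix_or_prefix_of_prefix (hj ▸ List.prefix_append u _)
            (List.prefix_append v _) with h' | h'
          · exact huv h'
          · exact hvu h'
      subst hbb
      have := List.append_cancel_left hj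
      simp only [List.length_cons, Nat.add_right_cancel_iff] at h
      rw [ih l2 h this]

end aux

/-- Words in {u,v}* of length at most k·max(|u|,|v|) number at least 2^k. -/
theorem card_kstar_two_words_ge {A : Type*} (u v : List A)
    (huv : ¬ u <+: v) (hvu : ¬ v <+: u) (k : ℕ) :
    2 ^ k ≤
      Set.ncard {w : List A |
        w.length ≤ k * max u.length v.length ∧ w ∈ ({u, v} : Language A)∗} := by
  classical
  have hu : u ≠ [] := by rintro rfl; exact huv (List.nil_prefix)
  have hv : v ≠ [] := by rintro rfl; exact hvu (List.nil_prefix)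
  have hune : u ≠ v := fun h => huv (h ▸ List.prefix_refl _)
  set K := max u.length v.length with hK
  set S := {w : List A | w.length ≤ k * K ∧ w ∈ ({u, v} : Language A)∗} with hS
  set f : List Bool → List A := fun l => (l.map (dUV u v)).flatten with hf
  -- finiteness of S
  have hSfin : S.Finite := by
    apply Set.Finite.subset ((List.finite_length_le Bool (k * K)).image f)
    rintro w ⟨hlen, hw⟩
    rw [Language.mem_kstar] at hw
    obtain ⟨L, rfl, hL⟩ := hw
    have hLlen : L.length ≤ k * K := by
      have h1 : ∀ y ∈ L.map List.length, 1 ≤ y := by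
        simp only [List.mem_map]
        rintro y ⟨x, hx, rfl⟩
        rcases hL x hx with rfl | rfl
        · exact List.length_pos_iff.mpr hu
        · exact List.length_pos_iff.mpr hv
      calc L.length = (L.map List.length).length := by simp
        _ ≤ (L.map List.length).sum := List.length_le_sum_of_one_le _ h1
        _ = L.flatten.length := List.length_flatten.symm
        _ ≤ k * K := hlen
    refine ⟨L.map (fun x => decide (x = u)), by simpa using hLlen, ?_⟩
    rw [hf]
    simp only [List.map_map]
    congr 1
    conv_rhs => rw [← List.map_id L]
    apply List.map_congr_left
    intro x hx
    rcases hL x hx with rfl | rfl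
    · simp [dUV, Function.comp]
    · simp [dUV, Function.comp, Ne.symm hune]
  -- membership of candidates
  have hmem : ∀ l : List Bool, l.length = k → f l ∈ S := by
    intro l hl
    constructor
    · calc (f l).length = ((l.map (dUV u v)).map List.length).sum := by
            simp [hf, List.length_flatten]
        _ ≤ ((l.map (dUV u v)).map List.length).length * K := by
            apply List.sum_le_card_nsmul
            simp only [List.mem_map]
            rintro y ⟨x, ⟨b, hb, rfl⟩, rfl⟩
            cases b <;> simp [dUV, hK]
        _ = k * K := by simp [hl]
    · apply Language.join_mem_kstar
      simp only [List.mem_map]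
      rintro y ⟨b, hb, rfl⟩
      cases b
      · exact Set.mem_insert_of_mem _ rfl
      · exact Set.mem_insert _ _
  have := Set.ncard_le_ncard
    (show (↑((Finset.univ : Finset (List.Vector Bool k)).image (fun x => f x.toList)) : Set (List A)) ⊆ S by
      intro w hw
      simp only [Finset.coe_image, Set.mem_image, Finset.coe_univ, Set.mem_univ] at hw
      obtain ⟨x, -, rfl⟩ := hw
      exact hmem x.toList x.toList_length) hSfin
  rw [Set.ncard_coe_finset] at this
  refine le_trans (le_of_eq ?_) this
  rw [Finset.card_image_of_injective _ ?_, Finset.card_univ, card_vector]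
  · simp
  · intro x y hxy
    exact List.Vector.toList_injective
      (joinUV_inj u v huv hvu _ _ (by rw [x.toList_length, y.toList_length]) hxy)
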